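/- arXiv:1004.4292 — 4 statements merged into one kernel-verified Lean document; each statement's English description precedes it below -/
import Mathlib

section
/- The function G(ρ) = √2 · (arcsec(1 − 2ρ) + 2√(ρ(ρ−1))) is strictly monotonically increasing on [1,∞), satisfies G(1) = π√2, and tends to infinity as ρ → ∞. -/
open Real Filter

/-- The inverse secant function: `arcsec x = arccos (1/x)`. -/
noncomputable def arcsec (x : ℝ) : ℝ := Real.arccos x⁻¹

/-- The needle-height function `G(ρ) = √2 (arcsec(1 − 2ρ) + 2√(ρ(ρ−1)))`. -/
noncomputable def G (ρ : ℝ) : ℝ :=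
  Real.sqrt 2 * (arcsec (1 - 2 * ρ) + 2 * Real.sqrt (ρ * (ρ - 1)))

lemma sqrt_aux {ρ : ℝ} (hρ : 1 < ρ) :
    Real.sqrt (1 - ((1 - 2 * ρ)⁻¹) ^ 2) = 2 * Real.sqrt (ρ * (ρ - 1)) / (2 * ρ - 1) := by
  have hc : (0:ℝ) < 2 * ρ - 1 := by linarith
  have h1 : (1 - 2 * ρ) ≠ 0 := by nlinarith
  have h2 : 1 - ((1 - 2 * ρ)⁻¹) ^ 2 = 4 * (ρ * (ρ - 1)) / (2 * ρ - 1) ^ 2 := by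
    field_simp
    ring
  rw [h2, Real.sqrt_div (by nlinarith), Real.sqrt_mul (by norm_num),
    Real.sqrt_sq hc.le]
  rw [show (4:ℝ) = 2 ^ 2 by norm_num, Real.sqrt_sq (by norm_num : (0:ℝ) ≤ 2)]

lemma hasDerivAt_G {ρ : ℝ} (hρ : 1 < ρ) :
    HasDerivAt G (Real.sqrt 2 * (((2 * ρ - 1) ^ 2 - 1) /
      ((2 * ρ - 1) * Real.sqrt (ρ * (ρ - 1))))) ρ := by
  have hc : (0:ℝ) < 2 * ρ - 1 := by linarith
  have h1 : (1 - 2 * ρ) ≠ 0 := by nlinarith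
  have ht : (0:ℝ) < ρ * (ρ - 1) := by nlinarith
  have hs : (0:ℝ) < Real.sqrt (ρ * (ρ - 1)) := Real.sqrt_pos.2 ht
  -- inner function for arcsec part
  have hinner : HasDerivAt (fun ρ : ℝ => (1 - 2 * ρ)⁻¹)
      (-(-2) / (1 - 2 * ρ) ^ 2) ρ := by
    have h := (((hasDerivAt_id ρ).const_mul 2).const_sub 1).inv h1
    simp only [id_eq] at h
    exact h.congr_deriv (by ring)
  have hx1 : (1 - 2 * ρ)⁻¹ ≠ -1 := by
    intro h
    rw [inv_eq_iff_eq_inv] at h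
    norm_num at h
    linarith
  have hx2 : (1 - 2 * ρ)⁻¹ ≠ 1 := by
    intro h
    rw [inv_eq_iff_eq_inv] at h
    norm_num at h
    linarith
  have harccos := (Real.hasDerivAt_arccos hx1 hx2).comp ρ hinner
  have hsq : HasDerivAt (fun ρ : ℝ => Real.sqrt (ρ * (ρ - 1)))
      (1 / (2 * Real.sqrt (ρ * (ρ - 1))) * (2 * ρ - 1)) ρ := by
    have hmul : HasDerivAt (fun ρ : ℝ => ρ * (ρ - 1)) (2 * ρ - 1) ρ := by
      have h := (hasDerivAt_id ρ).mul ((hasDerivAt_id ρ).sub_const 1)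
      simp only [id_eq] at h
      exact h.congr_deriv (by ring)
    exact (Real.hasDerivAt_sqrt ht.ne').comp ρ hmul
  have hG : HasDerivAt G (Real.sqrt 2 *
      ((-(1 / Real.sqrt (1 - ((1 - 2 * ρ)⁻¹) ^ 2)) * (-(-2) / (1 - 2 * ρ) ^ 2)) +
        2 * (1 / (2 * Real.sqrt (ρ * (ρ - 1))) * (2 * ρ - 1)))) ρ := by
    have : HasDerivAt (fun ρ : ℝ => arcsec (1 - 2 * ρ) + 2 * Real.sqrt (ρ * (ρ - 1)))
        ((-(1 / Real.sqrt (1 - ((1 - 2 * ρ)⁻¹) ^ 2)) * (-(-2) / (1 - 2 * ρ) ^ 2)) +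
          2 * (1 / (2 * Real.sqrt (ρ * (ρ - 1))) * (2 * ρ - 1))) ρ := by
      exact (harccos.add (hsq.const_mul 2))
    exact this.const_mul (Real.sqrt 2)
  convert hG using 1
  rw [sqrt_aux hρ, show (1 - 2 * ρ) ^ 2 = (2 * ρ - 1) ^ 2 from by ring]
  have hsneq : Real.sqrt (ρ * (ρ - 1)) ≠ 0 := hs.ne'
  set s := Real.sqrt (ρ * (ρ - 1)) with hsdef
  field_simp
  ring

lemma G_cont : ContinuousOn G (Set.Ici 1) := by
  apply ContinuousOn.mul continuousOn_const
  apply ContinuousOn.add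
  · apply Real.continuous_arccos.comp_continuousOn
    apply ContinuousOn.inv₀
    · fun_prop
    · intro x hx
      simp only [Set.mem_Ici] at hx
      nlinarith
  · fun_prop

/-- `G` is strictly increasing on `[1, ∞)`, `G(1) = π√2`, and `G(ρ) → ∞` as `ρ → ∞`. -/
theorem stmt_1 :
    StrictMonoOn G (Set.Ici 1) ∧ G 1 = π * Real.sqrt 2 ∧
      Tendsto G atTop atTop := by
  refine ⟨?_, ?_, ?_⟩
  · apply strictMonoOn_of_deriv_pos (convex_Ici 1) G_cont
    intro x hx
    rw [interior_Ici] at hx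
    have hx : (1:ℝ) < x := hx
    rw [(hasDerivAt_G hx).deriv]
    have hc : (0:ℝ) < 2 * x - 1 := by linarith
    have ht : (0:ℝ) < x * (x - 1) := by nlinarith
    have hs : (0:ℝ) < Real.sqrt (x * (x - 1)) := Real.sqrt_pos.2 ht
    have hnum : (0:ℝ) < (2 * x - 1) ^ 2 - 1 := by nlinarith
    positivity
  · have h1 : G 1 = Real.sqrt 2 * (Real.arccos ((1 - 2 * 1 : ℝ))⁻¹ + 2 * Real.sqrt (1 * (1 - 1))) := rfl
    rw [h1]
    norm_num [Real.arccos_neg_one, mul_comm]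
  · have hsqrt : Tendsto (fun x : ℝ => Real.sqrt (x - 1)) atTop atTop := by
      rw [tendsto_atTop_atTop]
      intro b
      refine ⟨b ^ 2 + 1, fun a ha => ?_⟩
      calc b ≤ Real.sqrt (b ^ 2) := by
              rw [Real.sqrt_sq_eq_abs]; exact le_abs_self b
        _ ≤ Real.sqrt (a - 1) := Real.sqrt_le_sqrt (by linarith)
    have hlow : Tendsto (fun x : ℝ => Real.sqrt 2 * 2 * Real.sqrt (x - 1)) atTop atTop := by
      apply Tendsto.const_mul_atTop (by positivity) hsqrt
    apply tendsto_atTop_mono' atTop _ hlow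
    filter_upwards [eventually_ge_atTop (1:ℝ)] with x hx
    have h1 : Real.sqrt (x - 1) ≤ Real.sqrt (x * (x - 1)) :=
      Real.sqrt_le_sqrt (by nlinarith)
    have h2 : 0 ≤ arcsec (1 - 2 * x) := Real.arccos_nonneg _
    have hs2 : (0:ℝ) ≤ Real.sqrt 2 := Real.sqrt_nonneg 2
    unfold G
    nlinarith [Real.sqrt_nonneg (x * (x - 1))]
end

section
/- Let A : [0,h] → ℝ be a nonnegative C¹ function satisfying A(0) = A(h) = 0 and the first-integral relation (1/(2π))(A'(ξ))² + A(ξ) − √(π A(ξ)) = πC for all ξ ∈ (0,h) with some constant C. Then C ≥ 0, and if ξ₀ ∈ (0,h) is a point where A attains its maximum, then A(ξ₀) ≥ π. -/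
open Real Set
open Topology Filter

/-- If `A ≥ 0` is `C¹` on `(0,h)`, continuous up to the boundary with `A(0) = A(h) = 0`,
not identically zero, and satisfies the first-integral relation
`(1/(2π))(A')² + A − √(πA) = πC` on `(0,h)`, then `C ≥ 0`, and any interior maximum
point `ξ₀` of `A` satisfies `A(ξ₀) ≥ π`. -/
theorem stmt_6 (h C : ℝ) (hh : 0 < h) (A A' : ℝ → ℝ)
    (hcont : ContinuousOn A (Icc 0 h))
    (hd1 : ∀ ξ ∈ Ioo 0 h, HasDerivAt A (A' ξ) ξ)
    (hd1cont : ContinuousOn A' (Ioo 0 h))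
    (hnonneg : ∀ ξ ∈ Icc 0 h, 0 ≤ A ξ)
    (hbc0 : A 0 = 0) (hbch : A h = 0)
    (hne : ∃ ξ ∈ Ioo 0 h, A ξ ≠ 0)
    (hfi : ∀ ξ ∈ Ioo 0 h,
      (1 / (2 * π)) * (A' ξ) ^ 2 + A ξ - Real.sqrt (π * A ξ) = π * C) :
    0 ≤ C ∧ ∀ ξ₀ ∈ Ioo 0 h, IsMaxOn A (Icc 0 h) ξ₀ → π ≤ A ξ₀ := by
  have hπ : (0:ℝ) < π := Real.pi_pos
  -- Step 1: A ξ − √(π A ξ) ≤ π C on (0,h)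
  have key : ∀ ξ ∈ Ioo 0 h, A ξ - Real.sqrt (π * A ξ) ≤ π * C := by
    intro ξ hξ
    have hfiξ := hfi ξ hξ
    have h1 : 0 ≤ (1 / (2 * π)) * (A' ξ) ^ 2 := by positivity
    linarith
  -- Step 2: 0 ≤ π C via the limit as ξ → 0⁺
  have hC : 0 ≤ π * C := by
    haveI hne0 : (𝓝[Ioo (0:ℝ) h] 0).NeBot := left_nhdsWithin_Ioo_neBot hh
    have hA0 : Filter.Tendsto A (𝓝[Ioo (0:ℝ) h] 0) (𝓝 0) := by
      have := (hcont 0 ⟨le_rfl, hh.le⟩).tendsto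
      rw [hbc0] at this
      exact this.mono_left (nhdsWithin_mono _ Ioo_subset_Icc_self)
    have hs : Filter.Tendsto (fun ξ => Real.sqrt (π * A ξ)) (𝓝[Ioo (0:ℝ) h] 0) (𝓝 0) := by
      have hmul : Filter.Tendsto (fun ξ => π * A ξ) (𝓝[Ioo (0:ℝ) h] 0) (𝓝 0) := by
        simpa using hA0.const_mul π
      have := (Real.continuous_sqrt.tendsto 0).comp hmul
      simpa [Function.comp_def] using this
    have htend : Filter.Tendsto (fun ξ => A ξ - Real.sqrt (π * A ξ))
        (𝓝[Ioo (0:ℝ) h] 0) (𝓝 0) := by simpa using hA0.sub hs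
    refine le_of_tendsto htend ?_
    exact Filter.eventually_iff_exists_mem.mpr
      ⟨Ioo 0 h, self_mem_nhdsWithin, key⟩
  refine ⟨nonneg_of_mul_nonneg_right hC hπ, ?_⟩
  · intro ξ₀ hξ₀ hmax
    -- derivative vanishes at the interior maximum
    have hloc : IsLocalMax A ξ₀ :=
      hmax.isLocalMax (Icc_mem_nhds hξ₀.1 hξ₀.2)
    have hder0 : A' ξ₀ = 0 := hloc.hasDerivAt_eq_zero (hd1 ξ₀ hξ₀)
    have hfiξ := hfi ξ₀ hξ₀
    rw [hder0] at hfiξ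
    have heq : A ξ₀ - Real.sqrt (π * A ξ₀) = π * C := by
      simpa using hfiξ
    -- A ξ₀ > 0
    obtain ⟨ξ₁, hξ₁, hAξ₁⟩ := hne
    have hpos : 0 < A ξ₀ := by
      have h1 : 0 < A ξ₁ :=
        lt_of_le_of_ne (hnonneg ξ₁ (Ioo_subset_Icc_self hξ₁)) (Ne.symm hAξ₁)
      have h2 : A ξ₁ ≤ A ξ₀ := hmax (Ioo_subset_Icc_self hξ₁)
      linarith
    -- √(π A ξ₀) ≤ A ξ₀, square both sides
    have hsq : Real.sqrt (π * A ξ₀) ≤ A ξ₀ := by linarith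
    have hss : π * A ξ₀ ≤ (A ξ₀) ^ 2 := by
      have := Real.sq_sqrt (by positivity : (0:ℝ) ≤ π * A ξ₀)
      nlinarith [Real.sqrt_nonneg (π * A ξ₀)]
    nlinarith
end

section
/- For ρ_m ≥ 1, the improper integral √2 ∫₀^{ρ_m} ρ/√(C + ρ − ρ²) dρ with C = ρ_m(ρ_m − 1) equals (1/√2)·(arcsec(1 − 2ρ_m) + 2√(ρ_m(ρ_m − 1))). -/
open Real

/-- For `ρ_m ≥ 1` and `C = ρ_m(ρ_m − 1)`, the improper integral
`√2 ∫₀^{ρ_m} ρ/√(C + ρ − ρ²) dρ` equals `(1/√2)(arcsec(1 − 2ρ_m) + 2√(ρ_m(ρ_m−1)))`. -/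
theorem stmt_7 :
    ∀ ρm : ℝ, 1 ≤ ρm →
      Real.sqrt 2 * ∫ ρ in (0:ℝ)..ρm,
          ρ / Real.sqrt (ρm * (ρm - 1) + ρ - ρ ^ 2) =
        1 / Real.sqrt 2 *
          (arcsec (1 - 2 * ρm) + 2 * Real.sqrt (ρm * (ρm - 1))) := by
  intro ρm hρm
  have h0 : (0:ℝ) ≤ ρm := le_trans zero_le_one hρm
  have hb : (1:ℝ) ≤ 2*ρm - 1 := by linarith
  have hb0 : (2*ρm - 1) ≠ 0 := by linarith
  have hbpos : (0:ℝ) < 2*ρm - 1 := by linarith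
  -- integrability
  have hint : IntervalIntegrable (fun ρ => ρ / Real.sqrt (ρm * (ρm - 1) + ρ - ρ ^ 2))
      MeasureTheory.volume 0 ρm := by
    have hg : IntervalIntegrable (fun x => Real.sqrt ρm * (ρm - x) ^ (-(1/2) : ℝ))
        MeasureTheory.volume 0 ρm := by
      have := ((intervalIntegral.intervalIntegrable_rpow' (a := 0) (b := ρm)
        (r := -(1/2)) (by norm_num)).comp_sub_left ρm)
      simp only [sub_zero, sub_self] at this
      exact (this.symm).const_mul _
    apply hg.mono_fun
    · apply Measurable.aestronglyMeasurable
      fun_prop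
    · filter_upwards [MeasureTheory.ae_restrict_mem measurableSet_uIoc] with ρ hρ
      rw [Set.uIoc_of_le h0] at hρ
      obtain ⟨hρ0, hρm'⟩ := hρ
      have hD : ρm * (ρm - 1) + ρ - ρ ^ 2 = (ρm - ρ) * (ρ + ρm - 1) := by ring
      have hsub : 0 ≤ ρm - ρ := by linarith
      have hfact : 0 ≤ ρ + ρm - 1 := by linarith
      have hfnn : 0 ≤ ρ / Real.sqrt (ρm * (ρm - 1) + ρ - ρ ^ 2) :=
        div_nonneg hρ0.le (Real.sqrt_nonneg _)
      have hgnn : 0 ≤ Real.sqrt ρm * (ρm - ρ) ^ (-(1/2) : ℝ) :=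
        mul_nonneg (Real.sqrt_nonneg _) (Real.rpow_nonneg hsub _)
      rw [Real.norm_of_nonneg hfnn, Real.norm_of_nonneg hgnn]
      rcases eq_or_lt_of_le hρm' with heq | hlt
      · subst heq
        have : ρ * (ρ - 1) + ρ - ρ ^ 2 = 0 := by ring
        rw [this, Real.sqrt_zero, div_zero]
        exact hgnn
      · have hsub' : 0 < ρm - ρ := by linarith
        have hrpow : (ρm - ρ) ^ (-(1/2) : ℝ) = (Real.sqrt (ρm - ρ))⁻¹ := by
          rw [Real.rpow_neg hsub, Real.sqrt_eq_rpow]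
        rw [hD, Real.sqrt_mul hsub, hrpow]
        have hnum : ρ ≤ Real.sqrt ρm * Real.sqrt (ρ + ρm - 1) := by
          rw [← Real.sqrt_mul h0]
          have : ρ = Real.sqrt (ρ ^ 2) := by rw [Real.sqrt_sq hρ0.le]
          rw [this]
          apply Real.sqrt_le_sqrt
          nlinarith
        have hs : 0 < Real.sqrt (ρm - ρ) := Real.sqrt_pos.2 hsub'
        have ht : 0 < Real.sqrt (ρ + ρm - 1) := Real.sqrt_pos.2 (by linarith)
        calc ρ / (Real.sqrt (ρm - ρ) * Real.sqrt (ρ + ρm - 1))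
            ≤ (Real.sqrt ρm * Real.sqrt (ρ + ρm - 1)) /
              (Real.sqrt (ρm - ρ) * Real.sqrt (ρ + ρm - 1)) := by gcongr
          _ = Real.sqrt ρm * (Real.sqrt (ρm - ρ))⁻¹ := by
              field_simp
  -- FTC
  have hFTC : (∫ ρ in (0:ℝ)..ρm, ρ / Real.sqrt (ρm * (ρm - 1) + ρ - ρ ^ 2)) =
      (fun x => 1/2 * Real.arcsin ((2*x - 1)/(2*ρm - 1))
        - Real.sqrt (ρm * (ρm - 1) + x - x ^ 2)) ρm
      - (fun x => 1/2 * Real.arcsin ((2*x - 1)/(2*ρm - 1))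
        - Real.sqrt (ρm * (ρm - 1) + x - x ^ 2)) 0 := by
    apply intervalIntegral.integral_eq_sub_of_hasDerivAt_of_le
      (f := fun x => 1/2 * Real.arcsin ((2*x - 1)/(2*ρm - 1))
        - Real.sqrt (ρm * (ρm - 1) + x - x ^ 2)) h0 _ _ hint
    · apply Continuous.continuousOn
      apply Continuous.sub
      · exact continuous_const.mul (Real.continuous_arcsin.comp
          (((continuous_const.mul continuous_id).sub continuous_const).div_const _))
      · exact Real.continuous_sqrt.comp (by continuity)
    · intro ρ hρ
      obtain ⟨hρ0, hρm'⟩ := hρ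
      set u : ℝ := (2*ρ - 1)/(2*ρm - 1) with hu
      have hu1 : u ≠ -1 := by
        rw [hu]; intro h; rw [div_eq_iff hb0] at h; nlinarith
      have hu2 : u ≠ 1 := by
        rw [hu]; intro h; rw [div_eq_iff hb0] at h; nlinarith
      set D : ℝ := ρm * (ρm - 1) + ρ - ρ ^ 2 with hDdef
      have hDpos : 0 < D := by nlinarith
      have hsD : 0 < Real.sqrt D := Real.sqrt_pos.2 hDpos
      have hlin : HasDerivAt (fun x : ℝ => (2*x - 1)/(2*ρm - 1)) (2/(2*ρm - 1)) ρ := by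
        have : HasDerivAt (fun x : ℝ => 2*x - 1) 2 ρ := by
          simpa using ((hasDerivAt_id ρ).const_mul 2).sub_const 1
        simpa [div_eq_mul_inv] using this.div_const (2*ρm - 1)
      have harcsin : HasDerivAt (fun x => Real.arcsin ((2*x - 1)/(2*ρm - 1)))
          (1 / Real.sqrt (1 - u^2) * (2/(2*ρm - 1))) ρ :=
        by have := (Real.hasDerivAt_arcsin hu1 hu2).comp ρ hlin; exact this
      have hpoly : HasDerivAt (fun x : ℝ => ρm * (ρm - 1) + x - x ^ 2) (1 - 2*ρ) ρ := by
        have h1 : HasDerivAt (fun x : ℝ => ρm * (ρm - 1) + x) 1 ρ := by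
          simpa using (hasDerivAt_id ρ).const_add (ρm * (ρm - 1))
        have h2 : HasDerivAt (fun x : ℝ => x ^ 2) (2*ρ) ρ := by
          simpa using hasDerivAt_pow 2 ρ
        exact h1.sub h2
      have hsqrt : HasDerivAt (fun x => Real.sqrt (ρm * (ρm - 1) + x - x ^ 2))
          (1 / (2 * Real.sqrt D) * (1 - 2*ρ)) ρ :=
        (Real.hasDerivAt_sqrt hDpos.ne').comp ρ hpoly
      have hcomb := (harcsin.const_mul (1/2 : ℝ)).sub hsqrt
      convert hcomb using 1
      · ext x; rfl
      have h1u : 1 - u^2 = 4*D / (2*ρm - 1)^2 := by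
        rw [hu]; field_simp; ring
      have hsqrt1u : Real.sqrt (1 - u^2) = 2 * Real.sqrt D / (2*ρm - 1) := by
        rw [h1u, Real.sqrt_div (by positivity) ((2*ρm - 1)^2),
          show (4:ℝ)*D = 2^2 * D by ring, Real.sqrt_mul (by positivity) D,
          Real.sqrt_sq (by norm_num : (0:ℝ) ≤ 2), Real.sqrt_sq hbpos.le]
      rw [hsqrt1u]
      field_simp
      ring
  rw [hFTC]
  simp only
  have e1 : (2*ρm - 1)/(2*ρm - 1) = 1 := div_self hb0
  have e2 : ρm * (ρm - 1) + ρm - ρm ^ 2 = 0 := by ring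
  have e3 : (2*(0:ℝ) - 1)/(2*ρm - 1) = -(2*ρm - 1)⁻¹ := by
    rw [div_eq_iff hb0]; field_simp; norm_num
  have e4 : ρm * (ρm - 1) + 0 - (0:ℝ) ^ 2 = ρm * (ρm - 1) := by ring
  rw [e1, e2, e3, e4, Real.sqrt_zero, Real.arcsin_one, Real.arcsin_neg]
  have e5 : arcsec (1 - 2*ρm) = π/2 + Real.arcsin (2*ρm - 1)⁻¹ := by
    rw [arcsec, show (1 - 2*ρm)⁻¹ = -(2*ρm - 1)⁻¹ by rw [← inv_neg]; ring_nf,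
      Real.arccos_neg, Real.arccos_eq_pi_div_two_sub_arcsin]
    ring
  rw [e5]
  have h2 : Real.sqrt 2 * Real.sqrt 2 = 2 := Real.mul_self_sqrt (by norm_num)
  have hs2 : Real.sqrt 2 ≠ 0 := by positivity
  rw [show (1:ℝ)/Real.sqrt 2 = Real.sqrt 2/2 by
    rw [div_eq_div_iff hs2 two_ne_zero]; linarith [h2]]
  ring
end

section
/- Let φ : [0,∞) → [0,1] be defined by φ(t) = 1 for 0 ≤ t ≤ r, φ(t) = ln(a/t)/ln(a/r) for r ≤ t ≤ a, and φ(t) = 0 for t ≥ a, where 0 < r < a. Let S̄ ⊂ T be a measurable subset of a 2-torus such that |S̄ᵗ| ≤ K t²/r² for all t ≥ r, where S̄ᵗ is the open t-neighborhood of S̄ and K > 0. Then ∫_T φ(dist(x, S̄)) dx ≤ C·K·a²/(r² ln(a/r)) for a universal constant C. -/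
open MeasureTheory Set Metric

/-- Fundamental domain `[0,ℓ)²` of the flat torus `T = [0,ℓ)²`. -/
def torusCell (ℓ : ℝ) : Set (ℝ × ℝ) := Ico 0 ℓ ×ˢ Ico 0 ℓ

/-- A subset of the plane is `ℓ`-periodic, i.e. describes a subset of the torus. -/
def PerSet (ℓ : ℝ) (S : Set (ℝ × ℝ)) : Prop :=
  ∀ p : ℝ × ℝ, ((p.1 + ℓ, p.2) ∈ S ↔ p ∈ S) ∧ ((p.1, p.2 + ℓ) ∈ S ↔ p ∈ S)

/-- The logarithmic cutoff profile `φ`: equal to `1` on `[0,r]`, to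
`ln(a/t)/ln(a/r)` on `[r,a]`, and to `0` beyond `a`. -/
noncomputable def logCutoff (r a t : ℝ) : ℝ :=
  if t ≤ r then 1 else if t ≤ a then Real.log (a / t) / Real.log (a / r) else 0

/-- Layer cake representation of the cutoff: `φ(t) = (∫_{s ∈ (r,a], s > t} ds/s) / log(a/r)`. -/
lemma logCutoff_eq_integral {r a : ℝ} (hr : 0 < r) (hra : r < a) (t : ℝ) (ht : 0 ≤ t) :
    logCutoff r a t = (∫ s in Ioc r a, (Ioi t).indicator (fun s => s⁻¹) s) / Real.log (a / r) := by
  have ha : 0 < a := hr.trans hra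
  rw [MeasureTheory.setIntegral_indicator measurableSet_Ioi, Set.Ioc_inter_Ioi]
  rcases le_or_gt t r with h | h
  · have : r ⊔ t = r := sup_eq_left.mpr h
    rw [this, logCutoff, if_pos h,
      ← intervalIntegral.integral_of_le hra.le,
      integral_inv_of_pos hr ha,
      div_self (ne_of_gt (Real.log_pos (by rw [lt_div_iff₀ hr]; linarith)))]
  · have hmax : r ⊔ t = t := sup_eq_right.mpr h.le
    rw [hmax, logCutoff, if_neg (not_le.mpr h)]
    rcases le_or_gt t a with h2 | h2
    · rw [if_pos h2, ← intervalIntegral.integral_of_le h2,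
        integral_inv_of_pos (hr.trans h) ha]
    · rw [if_neg (not_le.mpr h2), Set.Ioc_eq_empty (not_lt.mpr h2.le),
        Measure.restrict_empty, integral_zero_measure, zero_div]

/-- If the `t`-neighborhoods of `S̄ ⊂ T` satisfy `|S̄ᵗ| ≤ K t²/r²` for all `t ≥ r`, then
`∫_T φ(dist(x, S̄)) dx ≤ C K a²/(r² ln(a/r))` for a universal constant `C`. -/
theorem stmt_13 :
    ∃ C : ℝ, 0 < C ∧ ∀ ℓ r a K : ℝ, 0 < r → r < a → a ≤ ℓ → 0 < K →
      ∀ Sb : Set (ℝ × ℝ), PerSet ℓ Sb →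
        (∀ t : ℝ, r ≤ t →
          (volume ({p : ℝ × ℝ | infDist p Sb < t} ∩ torusCell ℓ)).toReal ≤
            K * t ^ 2 / r ^ 2) →
        ∫ p in torusCell ℓ, logCutoff r a (infDist p Sb) ≤
          C * K * a ^ 2 / (r ^ 2 * Real.log (a / r)) := by
  refine ⟨1/2, by norm_num, ?_⟩
  intro ℓ r a K hr hra hal hK Sb _hPer hvol
  have ha : 0 < a := hr.trans hra
  have hℓ : 0 < ℓ := lt_of_lt_of_le ha hal
  set L := Real.log (a / r) with hLdef
  have hL0 : 0 < L := Real.log_pos (by rw [lt_div_iff₀ hr]; linarith)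
  set μ : Measure (ℝ × ℝ) := volume.restrict (torusCell ℓ) with hμ
  set ν : Measure ℝ := volume.restrict (Ioc r a) with hν
  have hcellMeas : MeasurableSet (torusCell ℓ) :=
    (measurableSet_Ico.prod measurableSet_Ico)
  have hcellVol : volume (torusCell ℓ) < ⊤ := by
    rw [show (volume : Measure (ℝ × ℝ)) = Measure.prod volume volume from
      Measure.volume_eq_prod ℝ ℝ, torusCell, Measure.prod_prod, Real.volume_Ico, sub_zero]
    exact ENNReal.mul_lt_top ENNReal.ofReal_lt_top ENNReal.ofReal_lt_top
  haveI hμfin : IsFiniteMeasure μ := ⟨by rw [hμ, Measure.restrict_apply_univ]; exact hcellVol⟩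
  haveI hνfin : IsFiniteMeasure ν := ⟨by
    rw [hν, Measure.restrict_apply_univ, Real.volume_Ioc]; exact ENNReal.ofReal_lt_top⟩
  -- the double-variable function
  set F : (ℝ × ℝ) × ℝ → ℝ := fun q => if infDist q.1 Sb < q.2 then q.2⁻¹ else 0 with hF
  have hcont : Continuous fun p : ℝ × ℝ => infDist p Sb := continuous_infDist_pt Sb
  have hUmeas : MeasurableSet {q : (ℝ × ℝ) × ℝ | infDist q.1 Sb < q.2} :=
    measurableSet_lt ((hcont.comp continuous_fst).measurable) measurable_snd
  have hFmeas : Measurable F := by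
    have : F = Set.indicator {q : (ℝ × ℝ) × ℝ | infDist q.1 Sb < q.2} (fun q => q.2⁻¹) := by
      funext q
      by_cases h : infDist q.1 Sb < q.2 <;>
        simp [hF, h, Set.indicator_apply, Set.mem_setOf_eq]
    rw [this]
    exact (measurable_snd.inv).indicator hUmeas
  -- integrability of F on the product
  have hFint : Integrable F (μ.prod ν) := by
    refine ⟨hFmeas.aestronglyMeasurable, HasFiniteIntegral.of_bounded (C := r⁻¹) ?_⟩
    rw [hμ, hν, Measure.prod_restrict]
    filter_upwards [ae_restrict_mem (hcellMeas.prod measurableSet_Ioc)] with q hq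
    obtain ⟨-, hq2⟩ := hq
    have hq2r : r < q.2 := hq2.1
    have hq20 : 0 < q.2 := hr.trans hq2r
    simp only [hF]
    by_cases h : infDist q.1 Sb < q.2
    · rw [if_pos h, Real.norm_eq_abs, abs_of_nonneg (inv_nonneg.mpr hq20.le)]
      exact inv_anti₀ hr hq2r.le
    · rw [if_neg h, norm_zero]; positivity
  -- Step 1: rewrite the integrand via the layer-cake identity
  have step1 : ∫ p in torusCell ℓ, logCutoff r a (infDist p Sb) =
      (∫ p, (∫ s, F (p, s) ∂ν) ∂μ) / L := by
    rw [← integral_div]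
    refine integral_congr_ae (ae_of_all _ fun p => ?_)
    simp only
    rw [logCutoff_eq_integral hr hra _ (infDist_nonneg)]
    have heq : (∫ s, F (p, s) ∂ν) =
        ∫ s in Ioc r a, (Ioi (infDist p Sb)).indicator (fun s => s⁻¹) s := by
      rw [hν]
      refine integral_congr_ae (ae_of_all _ fun s => ?_)
      by_cases h : infDist p Sb < s <;>
        simp [hF, h, Set.indicator_apply, Set.mem_Ioi]
    rw [heq]
  -- Step 2: Fubini
  have step2 : (∫ p, (∫ s, F (p, s) ∂ν) ∂μ) = ∫ s, (∫ p, F (p, s) ∂μ) ∂ν :=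
    integral_integral_swap hFint
  -- Step 3: compute the inner integral
  have step3 : ∀ s : ℝ, (∫ p, F (p, s) ∂μ) =
      (volume ({p : ℝ × ℝ | infDist p Sb < s} ∩ torusCell ℓ)).toReal * s⁻¹ := by
    intro s
    have : (fun p : ℝ × ℝ => F (p, s)) =
        Set.indicator {p : ℝ × ℝ | infDist p Sb < s} (fun _ => s⁻¹) := by
      funext p
      by_cases h : infDist p Sb < s <;>
        simp [hF, h, Set.indicator_apply, Set.mem_setOf_eq]
    rw [hμ, this, MeasureTheory.setIntegral_indicator
      (measurableSet_lt hcont.measurable measurable_const),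
      MeasureTheory.setIntegral_const, Set.inter_comm, smul_eq_mul]
    rfl
  -- bound the outer integral
  have hbound : (∫ s, (∫ p, F (p, s) ∂μ) ∂ν) ≤ ∫ s in Ioc r a, K * s / r ^ 2 := by
    rw [hν]
    refine setIntegral_mono_on ?_ ?_ measurableSet_Ioc ?_
    · exact hFint.integral_prod_right
    · exact (continuous_const.mul continuous_id').div_const _ |>.integrableOn_Ioc
    · intro s hs
      rw [step3 s]
      have hs0 : 0 < s := hr.trans hs.1
      have h1 : (volume ({p : ℝ × ℝ | infDist p Sb < s} ∩ torusCell ℓ)).toReal ≤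
          K * s ^ 2 / r ^ 2 := hvol s hs.1.le
      calc (volume ({p : ℝ × ℝ | infDist p Sb < s} ∩ torusCell ℓ)).toReal * s⁻¹
          ≤ (K * s ^ 2 / r ^ 2) * s⁻¹ := by
            exact mul_le_mul_of_nonneg_right h1 (inv_nonneg.mpr hs0.le)
        _ = K * s / r ^ 2 := by field_simp
  have hcalc : ∫ s in Ioc r a, K * s / r ^ 2 = (K / r ^ 2) * ((a ^ 2 - r ^ 2) / 2) := by
    rw [← intervalIntegral.integral_of_le hra.le]
    have : (fun s : ℝ => K * s / r ^ 2) = fun s : ℝ => (K / r ^ 2) * s := by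
      funext s; ring
    rw [this, intervalIntegral.integral_const_mul, integral_id]
  have hfinal : (∫ p, (∫ s, F (p, s) ∂ν) ∂μ) ≤ K * a ^ 2 / (2 * r ^ 2) := by
    rw [step2]
    refine hbound.trans ?_
    rw [hcalc]
    have : (K / r ^ 2) * ((a ^ 2 - r ^ 2) / 2) ≤ (K / r ^ 2) * (a ^ 2 / 2) := by
      apply mul_le_mul_of_nonneg_left _ (by positivity)
      nlinarith
    refine this.trans_eq (by ring)
  rw [step1]
  rw [show (1 : ℝ) / 2 * K * a ^ 2 / (r ^ 2 * L) = (K * a ^ 2 / (2 * r ^ 2)) / L by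
    field_simp]
  exact div_le_div_of_nonneg_right hfinal hL0.le
end
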